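/- Let a be an even positive integer and b an odd positive integer, let λ = (1+a, 1^b) be the hook partition with arm length a and leg length b, and let α = (1 + a/2, 1^{(b−1)/2}). Then the Littlewood–Richardson coefficient c^λ_{αα} is at least 1. -/

import Mathlib

/-- A partition: a weakly decreasing finite sequence (list) of positive
integers. -/
def IsPartition (l : List ℕ) : Prop :=
  l.Pairwise (· ≥ ·) ∧ ∀ x ∈ l, 0 < x

/-- The `i`-th part (0-indexed) of a partition, `0` beyond its length. -/
def part (l : List ℕ) (i : ℕ) : ℕ := l.getD i 0

/-- Cell `(i, j)` (row `i`, column `j`, both 0-indexed) lies in the skew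
Young diagram `ν/λ`. -/
def InSkew (nu lam : List ℕ) (i j : ℕ) : Prop :=
  part lam i ≤ j ∧ j < part nu i

/-- Cell `(i, j)` comes weakly before cell `(r, c)` in the reverse reading
order: rows are read top to bottom, and each row is read right to left. -/
def ReadingLE (i j r c : ℕ) : Prop := i < r ∨ (i = r ∧ c ≤ j)

/-- `T` is a Littlewood–Richardson tableau of shape `ν/λ` and content `μ`:
`λ ⊆ ν`, the entries of `T` are positive exactly on the cells of the skew
diagram `ν/λ`, entries weakly increase from left to right along rows,
entries strictly increase from top to bottom down columns, for every `j ≥ 1`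
the entry `j` occurs exactly `μ_j` times, and the reverse reading word is a
lattice word: every prefix contains at least as many occurrences of `j` as
of `j + 1`, for every `j ≥ 1`. -/
structure IsLRTableau (nu lam mu : List ℕ) (T : ℕ → ℕ → ℕ) : Prop where
  subset : ∀ i, part lam i ≤ part nu i
  support : ∀ i j, 0 < T i j ↔ InSkew nu lam i j
  row_weak : ∀ i j j', InSkew nu lam i j → InSkew nu lam i j' → j ≤ j' →
    T i j ≤ T i j'
  col_strict : ∀ i i' j, InSkew nu lam i j → InSkew nu lam i' j → i < i' →
    T i j < T i' j
  content : ∀ k : ℕ, {p : ℕ × ℕ | T p.1 p.2 = k + 1}.ncard = part mu k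
  lattice : ∀ r c k : ℕ,
    {p : ℕ × ℕ | T p.1 p.2 = k + 2 ∧ ReadingLE p.1 p.2 r c}.ncard ≤
    {p : ℕ × ℕ | T p.1 p.2 = k + 1 ∧ ReadingLE p.1 p.2 r c}.ncard

/-- The Littlewood–Richardson coefficient `c^ν_{λμ}`: the number of
Littlewood–Richardson tableaux of shape `ν/λ` and content `μ`. -/
noncomputable def lrCoeff (nu lam mu : List ℕ) : ℕ :=
  {T : ℕ → ℕ → ℕ | IsLRTableau nu lam mu T}.ncard

/-- The Newell–Littlewood coefficient
`N^ν_{λμ} = Σ_{α,β,γ} c^λ_{αβ} · c^μ_{αγ} · c^ν_{βγ}`, the sum running over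
all triples of partitions `(α, β, γ)` (only finitely many terms are
nonzero). -/
noncomputable def nlCoeff (lam mu nu : List ℕ) : ℕ :=
  ∑ᶠ x : {l : List ℕ // IsPartition l} × {l : List ℕ // IsPartition l} ×
      {l : List ℕ // IsPartition l},
    lrCoeff lam x.1.val x.2.1.val * lrCoeff mu x.1.val x.2.2.val *
      lrCoeff nu x.2.1.val x.2.2.val

/-- The hook partition `(1 + a, 1^b)` with arm length `a` and leg length
`b`. -/
def hook (a b : ℕ) : List ℕ := (1 + a) :: List.replicate b 1

lemma part_hook (a b i : ℕ) : part (hook a b) i = if i = 0 then 1 + a else if i ≤ b then 1 else 0 := by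
  cases i with
  | zero => simp [part, hook]
  | succ n =>
    simp only [part, hook, List.getD_cons_succ]
    rw [if_neg (Nat.succ_ne_zero n)]
    rcases lt_or_ge n b with h | h
    · rw [List.getD_eq_getElem?_getD, List.getElem?_replicate, if_pos h]
      simp only [Option.getD_some]; rw [if_pos (by omega)]
    · rw [List.getD_eq_getElem?_getD, List.getElem?_replicate, if_neg (by omega)]
      simp only [Option.getD_none]; rw [if_neg (by omega)]

lemma inSkew_iff (m k : ℕ) (i j : ℕ) :
    InSkew (hook (2*m) (2*k+1)) (hook m k) i j ↔
      (i = 0 ∧ 1+m ≤ j ∧ j < 1+2*m) ∨ (k+1 ≤ i ∧ i ≤ 2*k+1 ∧ j = 0) := by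
  unfold InSkew
  rw [part_hook, part_hook]
  split_ifs <;> omega

def T0 (m k : ℕ) : ℕ → ℕ → ℕ := fun i j =>
  if i = 0 ∧ 1+m ≤ j ∧ j < 1+2*m then 1
  else if k+1 ≤ i ∧ i ≤ 2*k+1 ∧ j = 0 then i - k else 0

lemma skew_finite (m k : ℕ) :
    {p : ℕ × ℕ | InSkew (hook (2*m) (2*k+1)) (hook m k) p.1 p.2}.Finite := by
  apply Set.Finite.subset (Set.finite_Icc ((0:ℕ),(0:ℕ)) (2*k+1, 2*m))
  rintro ⟨i, j⟩ h
  rw [Set.mem_setOf_eq, inSkew_iff m k] at h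
  simp only [Set.mem_Icc, Prod.mk_le_mk]
  omega

-- value-1 cells of T0
lemma T0_eq_one (m k : ℕ) : {p : ℕ × ℕ | T0 m k p.1 p.2 = 1} =
    ((fun j => ((0:ℕ), j)) '' Set.Icc (1+m) (2*m)) ∪ {(k+1, 0)} := by
  ext ⟨i, j⟩
  simp only [Set.mem_setOf_eq, Set.mem_union, Set.mem_image, Set.mem_Icc,
    Set.mem_singleton_iff, Prod.mk.injEq, Prod.ext_iff, T0]
  split_ifs with h1 h2 <;> constructor <;> intro h <;> simp_all <;> omega

lemma T0_eq_ge_two (m k v : ℕ) : {p : ℕ × ℕ | T0 m k p.1 p.2 = v + 2} =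
    if v + 1 ≤ k then {(k + v + 2, 0)} else ∅ := by
  ext ⟨i, j⟩
  simp only [Set.mem_setOf_eq, T0]
  split_ifs with h1 h2 h3 <;>
    simp_all [Set.mem_singleton_iff, Prod.ext_iff, Set.mem_empty_iff_false] <;> omega

lemma T0_eq_one_ncard (m k : ℕ) (hm : 1 ≤ m) :
    {p : ℕ × ℕ | T0 m k p.1 p.2 = 1}.ncard = 1 + m := by
  rw [T0_eq_one]
  have hinj : Set.InjOn (fun j => ((0:ℕ), j)) (Set.Icc (1+m) (2*m)) := by
    intro x _ y _ h; simpa [Prod.ext_iff] using h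
  have hd : Disjoint ((fun j => ((0:ℕ), j)) '' Set.Icc (1+m) (2*m)) {((k+1:ℕ), (0:ℕ))} := by
    rw [Set.disjoint_singleton_right]
    rintro ⟨x, -, h⟩
    simp [Prod.ext_iff] at h
  rw [Set.ncard_union_eq hd ((Set.finite_Icc _ _).image _) (Set.finite_singleton _),
    Set.ncard_image_of_injOn hinj, Set.ncard_singleton, ← Finset.coe_Icc,
    Set.ncard_coe_finset, Nat.card_Icc]
  omega

lemma T0_pos_iff (m k i j : ℕ) : 0 < T0 m k i j ↔
    (i = 0 ∧ 1+m ≤ j ∧ j < 1+2*m) ∨ (k+1 ≤ i ∧ i ≤ 2*k+1 ∧ j = 0) := by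
  unfold T0; split_ifs <;> omega

lemma T0_isLR (m k : ℕ) (hm : 1 ≤ m) :
    IsLRTableau (hook (2*m) (2*k+1)) (hook m k) (hook m k) (T0 m k) := by
  constructor
  · intro i; rw [part_hook, part_hook]; split_ifs <;> omega
  · intro i j; rw [inSkew_iff, T0_pos_iff]
  · intro i j j' h h' hle
    rw [inSkew_iff] at h h'
    unfold T0; split_ifs <;> omega
  · intro i i' j h h' hlt
    rw [inSkew_iff] at h h'
    unfold T0; split_ifs <;> omega
  · intro v
    rw [part_hook]
    cases v with
    | zero => rw [T0_eq_one_ncard m k hm]; simp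
    | succ w =>
      rw [show w + 1 + 1 = w + 2 from rfl, T0_eq_ge_two]
      split_ifs with h1 h2 h3 <;> simp_all [Set.ncard_singleton]
  · intro r c v
    by_cases hne : {p : ℕ × ℕ | T0 m k p.1 p.2 = v + 2 ∧ ReadingLE p.1 p.2 r c}.Nonempty
    · obtain ⟨p, hp1, hp2⟩ := hne
      have hpmem : p ∈ {p : ℕ × ℕ | T0 m k p.1 p.2 = v + 2} := hp1
      rw [T0_eq_ge_two] at hpmem
      by_cases hk : v + 1 ≤ k
      · rw [if_pos hk] at hpmem
        rw [Set.mem_singleton_iff] at hpmem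
        subst hpmem
        have hR : ReadingLE (k + v + 1) 0 r c := by
          unfold ReadingLE at hp2 ⊢; omega
        have hval : T0 m k (k + v + 1) 0 = v + 1 := by
          unfold T0; rw [if_neg (by omega), if_pos (by omega)]; omega
        have hle1 : {p : ℕ × ℕ | T0 m k p.1 p.2 = v + 2 ∧ ReadingLE p.1 p.2 r c}.ncard ≤ 1 := by
          have : {p : ℕ × ℕ | T0 m k p.1 p.2 = v + 2 ∧ ReadingLE p.1 p.2 r c} ⊆
              {((k + v + 2 : ℕ), (0:ℕ))} := by
            intro q hq
            have : q ∈ {p : ℕ × ℕ | T0 m k p.1 p.2 = v + 2} := hq.1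
            rw [T0_eq_ge_two, if_pos hk] at this
            exact this
          simpa using Set.ncard_le_ncard this (Set.finite_singleton _)
        have hfin : {p : ℕ × ℕ | T0 m k p.1 p.2 = v + 1 ∧ ReadingLE p.1 p.2 r c}.Finite := by
          apply (skew_finite m k).subset
          intro q hq
          rw [Set.mem_setOf_eq, inSkew_iff, ← T0_pos_iff]
          obtain ⟨h1, -⟩ := hq
          omega
        have hge1 : 1 ≤ {p : ℕ × ℕ | T0 m k p.1 p.2 = v + 1 ∧ ReadingLE p.1 p.2 r c}.ncard :=
          (Set.ncard_pos hfin).mpr ⟨(k + v + 1, 0), hval, hR⟩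
        omega
      · rw [if_neg hk] at hpmem; exact absurd hpmem (Set.notMem_empty _)
    · rw [Set.not_nonempty_iff_eq_empty] at hne
      rw [hne, Set.ncard_empty]
      exact Nat.zero_le _

lemma LR_unique (m k : ℕ) (hm : 1 ≤ m) (T : ℕ → ℕ → ℕ)
    (hT : IsLRTableau (hook (2*m) (2*k+1)) (hook m k) (hook m k) T) :
    T = T0 m k := by
  -- finiteness of level sets
  have hfinval : ∀ v : ℕ, {p : ℕ × ℕ | T p.1 p.2 = v + 1}.Finite := by
    intro v
    apply (skew_finite m k).subset
    intro q hq
    rw [Set.mem_setOf_eq] at hq ⊢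
    exact (hT.support q.1 q.2).mp (by omega)
  -- value bound
  have hbound : ∀ i j, T i j ≤ k + 1 := by
    intro i j
    by_contra hc
    push_neg at hc
    have h0 := hT.content (T i j - 1)
    rw [part_hook] at h0
    rw [if_neg (by omega), if_neg (by omega)] at h0
    have hempty := (Set.ncard_eq_zero (hfinval (T i j - 1))).mp h0
    have : (i, j) ∈ {p : ℕ × ℕ | T p.1 p.2 = T i j - 1 + 1} := by
      show T i j = T i j - 1 + 1; omega
    rw [hempty] at this
    exact absurd this (Set.notMem_empty _)
  -- corner cell value is 1
  have hcell : InSkew (hook (2*m) (2*k+1)) (hook m k) 0 (2*m) := by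
    rw [inSkew_iff]; left; omega
  have hpos := (hT.support 0 (2*m)).mpr hcell
  have htop : T 0 (2*m) = 1 := by
    by_contra hne
    have h2 : 2 ≤ T 0 (2*m) := by omega
    have hlat := hT.lattice 0 (2*m) (T 0 (2*m) - 2)
    have hRHS : {p : ℕ × ℕ | T p.1 p.2 = T 0 (2*m) - 2 + 1 ∧ ReadingLE p.1 p.2 0 (2*m)} = ∅ := by
      ext ⟨i, j⟩
      simp only [Set.mem_setOf_eq, Set.mem_empty_iff_false, iff_false, not_and]
      intro hv hr
      obtain ⟨hi, hj⟩ : i = 0 ∧ 2*m ≤ j := by unfold ReadingLE at hr; omega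
      subst hi
      have hsk := (hT.support 0 j).mp (by omega)
      rw [inSkew_iff] at hsk
      have hj2 : j = 2*m := by omega
      subst hj2
      omega
    have hLHS : 1 ≤ {p : ℕ × ℕ | T p.1 p.2 = T 0 (2*m) - 2 + 2 ∧ ReadingLE p.1 p.2 0 (2*m)}.ncard := by
      refine (Set.ncard_pos ?_).mpr
        ⟨(0, 2*m), by show T 0 (2*m) = T 0 (2*m) - 2 + 2; omega, Or.inr ⟨rfl, le_refl _⟩⟩
      apply (skew_finite m k).subset
      intro q hq
      rw [Set.mem_setOf_eq] at hq ⊢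
      obtain ⟨hq1, -⟩ := hq
      exact (hT.support q.1 q.2).mp (by omega)
    rw [hRHS, Set.ncard_empty] at hlat
    omega
  -- row 0 values are all 1
  have hrow : ∀ j, 1 + m ≤ j → j < 1 + 2*m → T 0 j = 1 := by
    intro j h1 h2
    have hc1 : InSkew (hook (2*m) (2*k+1)) (hook m k) 0 j := by
      rw [inSkew_iff]; left; omega
    have := hT.row_weak 0 j (2*m) hc1 hcell (by omega)
    have := (hT.support 0 j).mpr hc1
    omega
  -- column chain
  have hchain : ∀ d i, k + 1 ≤ i → i + d ≤ 2*k + 1 → T i 0 + d ≤ T (i + d) 0 := by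
    intro d
    induction d with
    | zero => intro i _ _; simp
    | succ e ih =>
      intro i hi hie
      have h1 := ih i hi (by omega)
      have hc1 : InSkew (hook (2*m) (2*k+1)) (hook m k) (i + e) 0 := by
        rw [inSkew_iff]; right; omega
      have hc2 : InSkew (hook (2*m) (2*k+1)) (hook m k) (i + e + 1) 0 := by
        rw [inSkew_iff]; right; omega
      have hstep := hT.col_strict (i + e) (i + e + 1) 0 hc1 hc2 (by omega)
      show T i 0 + (e + 1) ≤ T (i + e + 1) 0
      omega
  -- column values
  have hcol : ∀ i, k + 1 ≤ i → i ≤ 2*k + 1 → T i 0 = i - k := by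
    intro i h1 h2
    have hlo := hchain (i - (k + 1)) (k + 1) (le_refl _) (by omega)
    have hhi := hchain (2*k + 1 - i) i h1 (by omega)
    rw [show k + 1 + (i - (k + 1)) = i by omega] at hlo
    rw [show i + (2*k + 1 - i) = 2*k + 1 by omega] at hhi
    have hb1 := hbound (2*k + 1) 0
    have hc1 : InSkew (hook (2*m) (2*k+1)) (hook m k) (k + 1) 0 := by
      rw [inSkew_iff]; right; omega
    have := (hT.support (k + 1) 0).mpr hc1
    omega
  -- conclude
  funext i j
  by_cases hsk : InSkew (hook (2*m) (2*k+1)) (hook m k) i j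
  · have hsk' := hsk
    rw [inSkew_iff] at hsk'
    rcases hsk' with ⟨hi, hj1, hj2⟩ | ⟨h1, h2, h3⟩
    · subst hi
      rw [hrow j hj1 hj2]
      unfold T0
      rw [if_pos ⟨rfl, hj1, hj2⟩]
    · subst h3
      rw [hcol i h1 h2]
      unfold T0
      rw [if_neg (by omega), if_pos ⟨h1, h2, rfl⟩]
  · have h1 : T i j = 0 := by
      by_contra hc
      exact hsk ((hT.support i j).mp (by omega))
    have h2 : T0 m k i j = 0 := by
      by_contra hc
      exact hsk ((inSkew_iff m k i j).mpr ((T0_pos_iff m k i j).mp (by omega)))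
    rw [h1, h2]

lemma LR_setEq (m k : ℕ) (hm : 1 ≤ m) :
    {T : ℕ → ℕ → ℕ | IsLRTableau (hook (2*m) (2*k+1)) (hook m k) (hook m k) T} = {T0 m k} := by
  ext T
  simp only [Set.mem_setOf_eq, Set.mem_singleton_iff]
  exact ⟨LR_unique m k hm T, fun h => h ▸ T0_isLR m k hm⟩

/-- For the hook `λ = (1+a, 1^b)` with `a` even positive and `b` odd, and
`α = (1 + a/2, 1^{(b−1)/2})`, one has `c^λ_{αα} ≥ 1`. -/
theorem one_le_lrCoeff_hook_even_arm_alpha_alpha (a b : ℕ)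
    (ha : Even a) (ha' : 0 < a) (hb : Odd b) :
    1 ≤ lrCoeff (hook a b) (hook (a / 2) ((b - 1) / 2))
        (hook (a / 2) ((b - 1) / 2)) := by
  obtain ⟨m, hm⟩ := ha
  obtain ⟨k, hk⟩ := hb
  have e1 : a / 2 = m := by omega
  have e2 : (b - 1) / 2 = k := by omega
  have e3 : a = 2 * m := by omega
  have e4 : b = 2 * k + 1 := by omega
  rw [e1, e2, e3, e4, lrCoeff, LR_setEq m k (by omega), Set.ncard_singleton]
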